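/- For s = n one has q = p_{λ^∨}(n) = n, and the ideal of ℤ[u_1, …, u_n] generated by the elements h_d(u_1, …, u_n) for all d ≥ 1 equals the ideal generated by the elements e_k(u_1, …, u_n) − C(n,k) for 1 ≤ k ≤ n. -/

import Mathlib

open MvPolynomial Finset

/-- The `k`-th elementary symmetric polynomial in the variables indexed by `T ⊆ {1,…,n}`. -/
noncomputable def esymmOn (n : ℕ) (T : Finset (Fin n)) (k : ℕ) : MvPolynomial (Fin n) ℤ :=
  ∑ A ∈ T.powersetCard k, ∏ i ∈ A, X i

/-- The dual-partition value `η_j = #{i : λ_i ≥ j}` (here `lam` is 0-indexed). -/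
def eta (l : ℕ) (lam : ℕ → ℕ) (j : ℕ) : ℕ :=
  ((Finset.range l).filter fun i => j ≤ lam i).card

/-- `p_{λ^∨}(s) = η_{n-s+1} + ⋯ + η_n`. -/
def pdual (n l : ℕ) (lam : ℕ → ℕ) (s : ℕ) : ℕ :=
  ∑ j ∈ Finset.Icc (n - s + 1) n, eta l lam j

/-- The generator `h_d(u_i)` of the K-theoretic Tanisaki ideal, for index set `T` and `q`. -/
noncomputable def hpoly (n : ℕ) (T : Finset (Fin n)) (q d : ℕ) : MvPolynomial (Fin n) ℤ :=
  if q = 0 then esymmOn n T d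
  else ∑ k ∈ Finset.range (d + 1),
    MvPolynomial.C ((-1 : ℤ) ^ (d - k) * ((q + d - k - 1).choose (q - 1) : ℤ)) * esymmOn n T k

/-- The K-theoretic Tanisaki ideal `𝓘_λ`. -/
noncomputable def KTanisaki (n l : ℕ) (lam : ℕ → ℕ) : Ideal (MvPolynomial (Fin n) ℤ) :=
  Ideal.span {p | ∃ s : ℕ, 1 ≤ s ∧ s ≤ n ∧ ∃ T : Finset (Fin n), T.card = s ∧
    ∃ d : ℕ, s + 1 - pdual n l lam s ≤ d ∧ p = hpoly n T (pdual n l lam s) d}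

/-- The (cohomological) Tanisaki ideal `I_λ`. -/
noncomputable def Tanisaki (n l : ℕ) (lam : ℕ → ℕ) : Ideal (MvPolynomial (Fin n) ℤ) :=
  Ideal.span {p | ∃ s : ℕ, 1 ≤ s ∧ s ≤ n ∧ ∃ T : Finset (Fin n), T.card = s ∧
    ∃ d : ℕ, s + 1 - pdual n l lam s ≤ d ∧ p = esymmOn n T d}



private lemma negchoose (n i : ℕ) :
    Ring.choose (-(n : ℤ)) i = (-1 : ℤ) ^ i * ((n + i - 1).choose i : ℤ) := by
  apply nsmul_right_injective (Nat.factorial_ne_zero i)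
  show i.factorial • Ring.choose (-(n : ℤ)) i = i.factorial • ((-1 : ℤ) ^ i * ((n + i - 1).choose i : ℤ))
  rw [← Ring.descPochhammer_eq_factorial_smul_choose, ← Polynomial.eval_eq_smeval]
  have h1 : (ascPochhammer ℤ i).eval ((n : ℤ))
      = (-1 : ℤ) ^ i * (descPochhammer ℤ i).eval (-(n : ℤ)) := by
    have := ascPochhammer_eval_neg_eq_descPochhammer (R := ℤ) (-(n : ℤ)) i
    rwa [neg_neg] at this
  have h2 : (ascPochhammer ℤ i).eval ((n : ℤ)) = ((n.ascFactorial i : ℕ) : ℤ) := by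
    rw [← ascPochhammer_eval_cast, ascPochhammer_nat_eq_ascFactorial]
  have h3 : (descPochhammer ℤ i).eval (-(n : ℤ)) = (-1 : ℤ) ^ i * ((n.ascFactorial i : ℕ) : ℤ) := by
    rw [← h2, h1, ← mul_assoc, ← pow_add, ← two_mul, pow_mul]
    norm_num
  rw [h3, Nat.ascFactorial_eq_factorial_mul_choose', nsmul_eq_mul]
  push_cast
  ring

private lemma keyId (n : ℕ) (hn : 1 ≤ n) (r : ℕ) :
    ∑ m ∈ Finset.range (r + 1),
      (-1 : ℤ) ^ m * ((n + m - 1).choose (n - 1) : ℤ) * (n.choose (r - m) : ℤ)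
      = if r = 0 then 1 else 0 := by
  have h0 := Ring.add_choose_eq (R := ℤ) (r := -(n : ℤ)) (s := (n : ℤ)) r (Commute.all _ _)
  rw [neg_add_cancel, Ring.choose_zero_ite, Finset.Nat.sum_antidiagonal_eq_sum_range_succ_mk] at h0
  rw [h0]
  refine Finset.sum_congr rfl fun m hm => ?_
  rw [negchoose, Ring.choose_natCast]
  have hsymm : (n + m - 1).choose (n - 1) = (n + m - 1).choose m := by
    have h := Nat.choose_symm (n := n + m - 1) (k := n - 1) (by omega)
    have : n + m - 1 - (n - 1) = m := by omega
    rw [this] at h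
    exact h.symm
  rw [hsymm]

private lemma esymmOn_univ_zero (n : ℕ) : esymmOn n Finset.univ 0 = 1 := by
  simp [esymmOn]

private lemma esymmOn_univ_of_gt (n k : ℕ) (h : n < k) : esymmOn n Finset.univ k = 0 := by
  unfold esymmOn
  rw [Finset.powersetCard_eq_empty.mpr (by simpa using h), Finset.sum_empty]

private lemma hpoly_univ_eq (n : ℕ) (hn : 1 ≤ n) (d : ℕ) :
    hpoly n Finset.univ n d = ∑ k ∈ Finset.range (d + 1),
      MvPolynomial.C ((-1 : ℤ) ^ (d - k) * ((n + d - k - 1).choose (n - 1) : ℤ))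
        * esymmOn n Finset.univ k := by
  rw [hpoly, if_neg (by omega)]

private lemma pdual_top (n l : ℕ) (lam : ℕ → ℕ)
    (hsum : ∑ i ∈ Finset.range l, lam i = n) : pdual n l lam n = n := by
  have hle : ∀ i ∈ Finset.range l, lam i ≤ n := fun i hi =>
    hsum ▸ Finset.single_le_sum (f := lam) (fun _ _ => Nat.zero_le _) hi
  have h1 : n - n + 1 = 1 := by omega
  calc pdual n l lam n
      = ∑ j ∈ Finset.Icc 1 n, ∑ i ∈ Finset.range l, if j ≤ lam i then 1 else 0 := by
        unfold pdual eta
        rw [h1]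
        exact Finset.sum_congr rfl fun j _ => Finset.card_filter _ _
    _ = ∑ i ∈ Finset.range l, ∑ j ∈ Finset.Icc 1 n, if j ≤ lam i then 1 else 0 :=
        Finset.sum_comm
    _ = ∑ i ∈ Finset.range l, lam i := by
        refine Finset.sum_congr rfl fun i hi => ?_
        rw [← Finset.card_filter]
        have hfe : (Finset.Icc 1 n).filter (fun j => j ≤ lam i) = Finset.Icc 1 (lam i) := by
          ext j
          simp only [Finset.mem_filter, Finset.mem_Icc]
          have := hle i hi
          omega
        rw [hfe, Nat.card_Icc]
        omega
    _ = n := hsum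

private lemma coefsum_zero (n : ℕ) (hn : 1 ≤ n) (d : ℕ) (hd : 1 ≤ d) :
    ∑ k ∈ Finset.range (d + 1),
      (-1 : ℤ) ^ (d - k) * ((n + d - k - 1).choose (n - 1) : ℤ) * (n.choose k : ℤ) = 0 := by
  have h := keyId n hn d
  rw [if_neg (by omega), ← Finset.sum_range_reflect] at h
  refine Eq.trans (Finset.sum_congr rfl fun k hk => ?_) h
  simp only [Finset.mem_range] at hk
  have e1 : d + 1 - 1 - k = d - k := by omega
  rw [e1]
  have e2 : n + (d - k) - 1 = n + d - k - 1 := by omega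
  have e3 : d - (d - k) = k := by omega
  rw [e2, e3]

/-- For s = n one has q = p_{λ^∨}(n) = n, and the ideal of ℤ[u_1,…,u_n]
generated by the h_d(u_1,…,u_n) for all d ≥ 1 equals the ideal generated by the
e_k(u_1,…,u_n) − C(n,k) for 1 ≤ k ≤ n. -/
theorem pdual_top_eq_and_full_hpoly_ideal_eq_esymm_ideal
    (n l : ℕ) (lam : ℕ → ℕ) (hn : 1 ≤ n)
    (hmono : ∀ i j : ℕ, i ≤ j → lam j ≤ lam i)
    (hpos : ∀ i < l, 0 < lam i) (hzero : ∀ i, l ≤ i → lam i = 0)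
    (hsum : ∑ i ∈ Finset.range l, lam i = n) :
    pdual n l lam n = n ∧
    Ideal.span {p : MvPolynomial (Fin n) ℤ |
        ∃ d : ℕ, 1 ≤ d ∧ p = hpoly n Finset.univ (pdual n l lam n) d} =
      Ideal.span {p : MvPolynomial (Fin n) ℤ |
        ∃ k : ℕ, 1 ≤ k ∧ k ≤ n ∧
          p = esymmOn n Finset.univ k - MvPolynomial.C (n.choose k : ℤ)} := by
  have hq : pdual n l lam n = n := pdual_top n l lam hsum
  refine ⟨hq, ?_⟩
  rw [hq]
  apply le_antisymm
  · rw [Ideal.span_le]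
    rintro p ⟨d, hd, rfl⟩
    have hrw : hpoly n Finset.univ n d
        = ∑ k ∈ Finset.range (d + 1),
            MvPolynomial.C ((-1 : ℤ) ^ (d - k) * ((n + d - k - 1).choose (n - 1) : ℤ))
              * (esymmOn n Finset.univ k - MvPolynomial.C (n.choose k : ℤ)) := by
      rw [hpoly_univ_eq n hn d, eq_comm]
      calc ∑ k ∈ Finset.range (d + 1),
            MvPolynomial.C ((-1 : ℤ) ^ (d - k) * ((n + d - k - 1).choose (n - 1) : ℤ))
              * (esymmOn n Finset.univ k - MvPolynomial.C (n.choose k : ℤ))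
          = ∑ k ∈ Finset.range (d + 1),
            (MvPolynomial.C ((-1 : ℤ) ^ (d - k) * ((n + d - k - 1).choose (n - 1) : ℤ))
              * esymmOn n Finset.univ k
             - MvPolynomial.C ((-1 : ℤ) ^ (d - k) * ((n + d - k - 1).choose (n - 1) : ℤ)
                  * (n.choose k : ℤ))) := by
            refine Finset.sum_congr rfl fun k _ => ?_
            rw [mul_sub, ← MvPolynomial.C_mul]
        _ = (∑ k ∈ Finset.range (d + 1),
            MvPolynomial.C ((-1 : ℤ) ^ (d - k) * ((n + d - k - 1).choose (n - 1) : ℤ))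
              * esymmOn n Finset.univ k)
            - MvPolynomial.C (∑ k ∈ Finset.range (d + 1),
                (-1 : ℤ) ^ (d - k) * ((n + d - k - 1).choose (n - 1) : ℤ) * (n.choose k : ℤ)) := by
            rw [Finset.sum_sub_distrib, map_sum]
        _ = ∑ k ∈ Finset.range (d + 1),
            MvPolynomial.C ((-1 : ℤ) ^ (d - k) * ((n + d - k - 1).choose (n - 1) : ℤ))
              * esymmOn n Finset.univ k := by
            rw [coefsum_zero n hn d hd, MvPolynomial.C_0, sub_zero]
    rw [hrw]
    apply Ideal.sum_mem
    intro k _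
    by_cases hk0 : k = 0
    · subst hk0
      rw [esymmOn_univ_zero, Nat.choose_zero_right]
      simp
    · by_cases hkn : k ≤ n
      · exact Ideal.mul_mem_left _ _
          (Ideal.subset_span ⟨k, Nat.one_le_iff_ne_zero.mpr hk0, hkn, rfl⟩)
      · have hek : esymmOn n Finset.univ k = 0 := esymmOn_univ_of_gt n k (by omega)
        have hck : n.choose k = 0 := Nat.choose_eq_zero_of_lt (by omega)
        rw [hek, hck]
        simp
  · rw [Ideal.span_le]
    rintro p ⟨r, hr1, hrn, rfl⟩
    have key : ∑ d ∈ Finset.range (r + 1),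
        MvPolynomial.C ((n.choose (r - d) : ℤ)) * hpoly n Finset.univ n d
        = esymmOn n Finset.univ r := by
      have hpad : ∀ d ∈ Finset.range (r + 1),
          MvPolynomial.C ((n.choose (r - d) : ℤ)) * hpoly n Finset.univ n d
          = ∑ k ∈ Finset.range (r + 1), (if k ≤ d then
              MvPolynomial.C ((n.choose (r - d) : ℤ)
                * ((-1 : ℤ) ^ (d - k) * ((n + d - k - 1).choose (n - 1) : ℤ)))
                * esymmOn n Finset.univ k else 0) := by
        intro d hd
        simp only [Finset.mem_range] at hd
        rw [← Finset.sum_filter]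
        have hfe : (Finset.range (r + 1)).filter (fun k => k ≤ d) = Finset.range (d + 1) := by
          ext k
          simp only [Finset.mem_filter, Finset.mem_range]
          omega
        rw [hfe, hpoly_univ_eq n hn d, Finset.mul_sum]
        refine Finset.sum_congr rfl fun k _ => ?_
        rw [← mul_assoc, ← MvPolynomial.C_mul]
      rw [Finset.sum_congr rfl hpad, Finset.sum_comm]
      have hinner : ∀ k ∈ Finset.range (r + 1),
          (∑ d ∈ Finset.range (r + 1), (if k ≤ d then
              MvPolynomial.C ((n.choose (r - d) : ℤ)
                * ((-1 : ℤ) ^ (d - k) * ((n + d - k - 1).choose (n - 1) : ℤ)))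
                * esymmOn n Finset.univ k else 0))
          = (if k = r then esymmOn n Finset.univ k else 0) := by
        intro k hk
        simp only [Finset.mem_range] at hk
        have hite : ∀ d, (if k ≤ d then
              MvPolynomial.C ((n.choose (r - d) : ℤ)
                * ((-1 : ℤ) ^ (d - k) * ((n + d - k - 1).choose (n - 1) : ℤ)))
                * esymmOn n Finset.univ k else 0)
            = MvPolynomial.C (if k ≤ d then (n.choose (r - d) : ℤ)
                * ((-1 : ℤ) ^ (d - k) * ((n + d - k - 1).choose (n - 1) : ℤ)) else 0)
                * esymmOn n Finset.univ k := by
          intro d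
          split <;> simp
        rw [Finset.sum_congr rfl (fun d _ => hite d), ← Finset.sum_mul, ← map_sum]
        have hs : (∑ d ∈ Finset.range (r + 1), (if k ≤ d then (n.choose (r - d) : ℤ)
                * ((-1 : ℤ) ^ (d - k) * ((n + d - k - 1).choose (n - 1) : ℤ)) else 0))
            = if k = r then 1 else 0 := by
          rw [← Finset.sum_filter]
          have hfe : (Finset.range (r + 1)).filter (fun d => k ≤ d) = Finset.Ico k (r + 1) := by
            ext d
            simp only [Finset.mem_filter, Finset.mem_range, Finset.mem_Ico]
            omega
          rw [hfe, Finset.sum_Ico_eq_sum_range]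
          have hrk : r + 1 - k = (r - k) + 1 := by omega
          rw [hrk]
          calc ∑ i ∈ Finset.range ((r - k) + 1), ((n.choose (r - (k + i)) : ℤ)
                  * ((-1 : ℤ) ^ ((k + i) - k) * ((n + (k + i) - k - 1).choose (n - 1) : ℤ)))
              = ∑ i ∈ Finset.range ((r - k) + 1),
                  (-1 : ℤ) ^ i * ((n + i - 1).choose (n - 1) : ℤ) * (n.choose ((r - k) - i) : ℤ) := by
                refine Finset.sum_congr rfl fun i hi => ?_
                have e1 : k + i - k = i := by omega
                have e2 : n + (k + i) - k - 1 = n + i - 1 := by omega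
                have e3 : r - (k + i) = (r - k) - i := by omega
                rw [e1, e2, e3]
                ring
            _ = if r - k = 0 then 1 else 0 := keyId n hn (r - k)
            _ = if k = r then 1 else 0 := by
                by_cases h : k = r
                · simp [h]
                · rw [if_neg (by omega), if_neg h]
        rw [hs]
        split_ifs <;> simp
      rw [Finset.sum_congr rfl hinner]
      simp
    have h0 : hpoly n Finset.univ n 0 = 1 := by
      rw [hpoly_univ_eq n hn 0]
      simp [esymmOn_univ_zero]
    have hsplit : esymmOn n Finset.univ r - MvPolynomial.C (n.choose r : ℤ)
        = ∑ d ∈ Finset.range r,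
            MvPolynomial.C ((n.choose (r - (d + 1)) : ℤ)) * hpoly n Finset.univ n (d + 1) := by
      rw [← key, Finset.sum_range_succ', h0, Nat.sub_zero, mul_one, add_sub_cancel_right]
    rw [hsplit]
    apply Ideal.sum_mem
    intro d _
    exact Ideal.mul_mem_left _ _ (Ideal.subset_span ⟨d + 1, by omega, rfl⟩)
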